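/- Let w : ℝ → ℝ be defined by w(0) = 1 and w(t) = (√(1+48t) − 1)/(24t) for t ≠ 0, and define G₃(t) = w(t)³ · ( (5482/27)·(2−w(t))^{−6} − (14620/9)·(2−w(t))^{−7} + (15580/3)·(2−w(t))^{−8} − (231920/27)·(2−w(t))^{−9} + (70270/9)·(2−w(t))^{−10} − 3716·(2−w(t))^{−11} + (19600/27)·(2−w(t))^{−12} ). Then for every natural number j ≥ 1, (−1)^{j−1} times the (j−1)-st iterated derivative of G₃ at 0 equals 12^{j−1} · (j−1)(j−2)(j−3) · ( 4^{j−1}·j!·(245j/20736 + 781/41472) − ((2j)!/j!)·(337j/22680 + 1/1008) ). -/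

import Mathlib

open Nat

open Finset in
noncomputable def sfun (i : ℕ) (t : ℝ) : ℝ := Real.sqrt (1 + 48*t) ^ (-(i:ℤ))

noncomputable def aco : ℕ → ℝ
  | 3 => -73/432 | 4 => -97/576 | 5 => 1303/576 | 6 => -1577/1728 | 7 => -3325/576
  | 8 => 2159/576 | 9 => 9391/1728 | 10 => -2353/576 | 11 => -337/192 | 12 => 1225/864
  | _ => 0

lemma sfun_zero (i : ℕ) : sfun i 0 = 1 := by norm_num [sfun]

lemma sderiv (i : ℕ) {t : ℝ} (ht : t ∈ Set.Ioo (-(1/96) : ℝ) (1/96)) :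
    HasDerivAt (sfun i) (-(24*(i:ℝ)) * sfun (i+2) t) t := by
  obtain ⟨ht1, ht2⟩ := ht
  have h1 : (0:ℝ) < 1 + 48*t := by linarith
  have hs : 0 < Real.sqrt (1 + 48*t) := Real.sqrt_pos.2 h1
  have hlin : HasDerivAt (fun t : ℝ => 1 + 48*t) 48 t := by
    simpa using ((hasDerivAt_id t).const_mul (48:ℝ)).const_add 1
  have hsq : HasDerivAt (fun t : ℝ => Real.sqrt (1 + 48*t)) (1 / (2 * Real.sqrt (1+48*t)) * 48) t :=
    (Real.hasDerivAt_sqrt h1.ne').comp t hlin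
  have hz := (hasDerivAt_zpow (-(i:ℤ)) (Real.sqrt (1+48*t)) (Or.inl hs.ne')).comp t hsq
  have hval : (Int.cast (-(i:ℤ)) : ℝ) * Real.sqrt (1+48*t) ^ (-(i:ℤ) - 1) * (1 / (2 * Real.sqrt (1+48*t)) * 48)
      = -(24*(i:ℝ)) * sfun (i+2) t := by
    rw [show (-(i:ℤ) - 1) = (-((i:ℕ)+2:ℤ)) + 1 by ring, zpow_add₀ hs.ne']
    simp only [sfun]
    push_cast
    field_simp
    ring
  rw [hval] at hz
  exact hz



noncomputable def Oprod (n : ℕ) : ℝ := ∏ k ∈ Finset.range n, (2*(k:ℝ)+1)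

lemma Oprod_succ (n : ℕ) : Oprod (n+1) = Oprod n * (2*(n:ℝ)+1) := Finset.prod_range_succ _ n

lemma P4 (n : ℕ) : ∏ k ∈ Finset.range n, ((4:ℝ)+2*(k:ℝ)) = 2^n * (n ! : ℝ) * ((n:ℝ)+1) := by
  induction n with
  | zero => norm_num
  | succ n ih =>
    rw [Finset.prod_range_succ, ih, Nat.factorial_succ]
    push_cast; ring

lemma P6 (n : ℕ) : ∏ k ∈ Finset.range n, ((6:ℝ)+2*(k:ℝ))
    = 2^n * (n ! : ℝ) * (((n:ℝ)+1)*((n:ℝ)+2)/2) := by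
  induction n with
  | zero => norm_num
  | succ n ih =>
    rw [Finset.prod_range_succ, ih, Nat.factorial_succ]
    push_cast; ring

lemma P8 (n : ℕ) : ∏ k ∈ Finset.range n, ((8:ℝ)+2*(k:ℝ))
    = 2^n * (n ! : ℝ) * (((n:ℝ)+1)*((n:ℝ)+2)*((n:ℝ)+3)/6) := by
  induction n with
  | zero => norm_num
  | succ n ih =>
    rw [Finset.prod_range_succ, ih, Nat.factorial_succ]
    push_cast; ring

lemma P10 (n : ℕ) : ∏ k ∈ Finset.range n, ((10:ℝ)+2*(k:ℝ))
    = 2^n * (n ! : ℝ) * (((n:ℝ)+1)*((n:ℝ)+2)*((n:ℝ)+3)*((n:ℝ)+4)/24) := by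
  induction n with
  | zero => norm_num
  | succ n ih =>
    rw [Finset.prod_range_succ, ih, Nat.factorial_succ]
    push_cast; ring

lemma P12 (n : ℕ) : ∏ k ∈ Finset.range n, ((12:ℝ)+2*(k:ℝ))
    = 2^n * (n ! : ℝ) * (((n:ℝ)+1)*((n:ℝ)+2)*((n:ℝ)+3)*((n:ℝ)+4)*((n:ℝ)+5)/120) := by
  induction n with
  | zero => norm_num
  | succ n ih =>
    rw [Finset.prod_range_succ, ih, Nat.factorial_succ]
    push_cast; ring

lemma P3 (n : ℕ) : ∏ k ∈ Finset.range n, ((3:ℝ)+2*(k:ℝ)) = Oprod n * (2*(n:ℝ)+1) := by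
  induction n with
  | zero => norm_num [Oprod]
  | succ n ih =>
    rw [Finset.prod_range_succ, ih, Oprod_succ]
    push_cast; ring

lemma P5 (n : ℕ) : ∏ k ∈ Finset.range n, ((5:ℝ)+2*(k:ℝ))
    = Oprod n * ((2*(n:ℝ)+1)*(2*(n:ℝ)+3)/3) := by
  induction n with
  | zero => norm_num [Oprod]
  | succ n ih =>
    rw [Finset.prod_range_succ, ih, Oprod_succ]
    push_cast; ring

lemma P7 (n : ℕ) : ∏ k ∈ Finset.range n, ((7:ℝ)+2*(k:ℝ))
    = Oprod n * ((2*(n:ℝ)+1)*(2*(n:ℝ)+3)*(2*(n:ℝ)+5)/15) := by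
  induction n with
  | zero => norm_num [Oprod]
  | succ n ih =>
    rw [Finset.prod_range_succ, ih, Oprod_succ]
    push_cast; ring

lemma P9 (n : ℕ) : ∏ k ∈ Finset.range n, ((9:ℝ)+2*(k:ℝ))
    = Oprod n * ((2*(n:ℝ)+1)*(2*(n:ℝ)+3)*(2*(n:ℝ)+5)*(2*(n:ℝ)+7)/105) := by
  induction n with
  | zero => norm_num [Oprod]
  | succ n ih =>
    rw [Finset.prod_range_succ, ih, Oprod_succ]
    push_cast; ring

lemma P11 (n : ℕ) : ∏ k ∈ Finset.range n, ((11:ℝ)+2*(k:ℝ))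
    = Oprod n * ((2*(n:ℝ)+1)*(2*(n:ℝ)+3)*(2*(n:ℝ)+5)*(2*(n:ℝ)+7)*(2*(n:ℝ)+9)/945) := by
  induction n with
  | zero => norm_num [Oprod]
  | succ n ih =>
    rw [Finset.prod_range_succ, ih, Oprod_succ]
    push_cast; ring

lemma Ofact (n : ℕ) : ((2*n)! : ℝ) = 2^n * (n ! : ℝ) * Oprod n := by
  induction n with
  | zero => norm_num [Oprod]
  | succ n ih =>
    have h2 : 2*(n+1) = (2*n+1)+1 := by ring
    rw [h2, Nat.factorial_succ, Nat.factorial_succ (2*n)]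
    push_cast [ih, Oprod_succ, Nat.factorial_succ]
    ring

open Finset in
lemma key (n : ℕ) :
    ∑ i ∈ Finset.Icc 3 12, aco i * 24^n * (∏ k ∈ Finset.range n, ((i:ℝ) + 2*(k:ℝ)))
    = 12 ^ n * (((n:ℝ)) * ((n:ℝ) - 1) * ((n:ℝ) - 2)) *
        (4 ^ n * ((n+1)! : ℝ) * (245 * ((n:ℝ)+1) / 20736 + 781 / 41472)
          - ((2 * (n+1))! : ℝ) / ((n+1)! : ℝ) * (337 * ((n:ℝ)+1) / 22680 + 1 / 1008)) := by
  have hexp : ∑ i ∈ Finset.Icc 3 12, aco i * 24^n * (∏ k ∈ Finset.range n, ((i:ℝ) + 2*(k:ℝ)))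
      = aco 3 * 24^n * (∏ k ∈ Finset.range n, ((3:ℝ) + 2*(k:ℝ)))
      + aco 4 * 24^n * (∏ k ∈ Finset.range n, ((4:ℝ) + 2*(k:ℝ)))
      + aco 5 * 24^n * (∏ k ∈ Finset.range n, ((5:ℝ) + 2*(k:ℝ)))
      + aco 6 * 24^n * (∏ k ∈ Finset.range n, ((6:ℝ) + 2*(k:ℝ)))
      + aco 7 * 24^n * (∏ k ∈ Finset.range n, ((7:ℝ) + 2*(k:ℝ)))
      + aco 8 * 24^n * (∏ k ∈ Finset.range n, ((8:ℝ) + 2*(k:ℝ)))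
      + aco 9 * 24^n * (∏ k ∈ Finset.range n, ((9:ℝ) + 2*(k:ℝ)))
      + aco 10 * 24^n * (∏ k ∈ Finset.range n, ((10:ℝ) + 2*(k:ℝ)))
      + aco 11 * 24^n * (∏ k ∈ Finset.range n, ((11:ℝ) + 2*(k:ℝ)))
      + aco 12 * 24^n * (∏ k ∈ Finset.range n, ((12:ℝ) + 2*(k:ℝ))) := by
    norm_num [Finset.sum_Icc_succ_top, Finset.Icc_self]
  rw [hexp, P3, P4, P5, P6, P7, P8, P9, P10, P11, P12]
  have hf1 : ((n+1)! : ℝ) = ((n:ℝ)+1) * (n ! : ℝ) := by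
    rw [Nat.factorial_succ]; push_cast; ring
  have hf2 : ((2*(n+1))! : ℝ) = 2^(n+1) * ((n+1)! : ℝ) * (Oprod n * (2*(n:ℝ)+1)) := by
    rw [Ofact (n+1), Oprod_succ]
  rw [hf2, hf1]
  have h24 : (24:ℝ)^n = 12^n * 2^n := by rw [← mul_pow]; norm_num
  have h4 : (4:ℝ)^n = 2^n * 2^n := by rw [← mul_pow]; norm_num
  rw [h24, h4]
  have hfne : (n ! : ℝ) ≠ 0 := Nat.cast_ne_zero.2 (Nat.factorial_ne_zero n)
  have hne : ((n:ℝ)+1) ≠ 0 := by positivity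
  simp only [aco]
  field_simp
  ring

/-- Count of regular 4-valent genus-3 maps (g = 3 row of Table 2): with `w` the branch
of the string equation `1 = w + 12 t w²` with `w(0) = 1`, and `G₃` as below,
`(-1)^(j-1) G₃^{(j-1)}(0) = 12^(j-1) (j-1)(j-2)(j-3)
  (4^(j-1) j! (245j/20736 + 781/41472) - (2j)!/j! (337j/22680 + 1/1008))` for `j ≥ 1`. -/
theorem regular_genus_three_counts
    (w : ℝ → ℝ) (hw0 : w 0 = 1)
    (hw : ∀ t : ℝ, t ≠ 0 → w t = (Real.sqrt (1 + 48 * t) - 1) / (24 * t))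
    (G₃ : ℝ → ℝ)
    (hG₃ : G₃ = fun t => w t ^ 3 *
      ((5482 / 27) * (2 - w t) ^ (-6 : ℤ) - (14620 / 9) * (2 - w t) ^ (-7 : ℤ)
        + (15580 / 3) * (2 - w t) ^ (-8 : ℤ) - (231920 / 27) * (2 - w t) ^ (-9 : ℤ)
        + (70270 / 9) * (2 - w t) ^ (-10 : ℤ) - 3716 * (2 - w t) ^ (-11 : ℤ)
        + (19600 / 27) * (2 - w t) ^ (-12 : ℤ))) :
    ∀ j : ℕ, 1 ≤ j → (-1) ^ (j - 1) * iteratedDeriv (j - 1) G₃ 0 =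
      12 ^ (j - 1) * (((j : ℝ) - 1) * ((j : ℝ) - 2) * ((j : ℝ) - 3)) *
        (4 ^ (j - 1) * (j ! : ℝ) * (245 * (j : ℝ) / 20736 + 781 / 41472)
          - ((2 * j)! : ℝ) / (j ! : ℝ) * (337 * (j : ℝ) / 22680 + 1 / 1008)) := by
  intro j hj
  obtain ⟨n, rfl⟩ : ∃ n, j = n + 1 := ⟨j - 1, (Nat.succ_pred_eq_of_pos hj).symm⟩
  simp only [Nat.add_sub_cancel]
  -- pointwise identity on a neighborhood of 0
  have hpt : ∀ t ∈ Set.Ioo (-(1/96) : ℝ) (1/96),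
      G₃ t = ∑ i ∈ Finset.Icc 3 12, aco i * sfun i t := by
    intro t ht
    obtain ⟨ht1, ht2⟩ := ht
    have h1 : (0:ℝ) < 1 + 48*t := by linarith
    have hs : 0 < Real.sqrt (1 + 48*t) := Real.sqrt_pos.2 h1
    have hs2 : Real.sqrt (1 + 48*t) ^ 2 = 1 + 48*t := Real.sq_sqrt h1.le
    set s : ℝ := Real.sqrt (1 + 48*t) with hsdef
    have hsp1 : s + 1 ≠ 0 := by positivity
    have hwt : w t = 2/(s+1) := by
      rcases eq_or_ne t 0 with h0 | h0
      · subst h0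
        have hseq : s = 1 := by rw [hsdef]; norm_num
        rw [hw0, hseq]; norm_num
      · rw [hw t h0, show (1 + 48 * t : ℝ) = 1 + 48*t by ring, ← hsdef,
          div_eq_div_iff (by intro h; apply h0; linarith [mul_eq_zero.1 h]) hsp1]
        · linear_combination hs2
    have h2w : (2:ℝ) - w t = 2*s/(s+1) := by
      rw [hwt]; field_simp; ring
    have hsum : ∑ i ∈ Finset.Icc 3 12, aco i * sfun i t
        = aco 3 * sfun 3 t + aco 4 * sfun 4 t + aco 5 * sfun 5 t + aco 6 * sfun 6 t
        + aco 7 * sfun 7 t + aco 8 * sfun 8 t + aco 9 * sfun 9 t + aco 10 * sfun 10 t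
        + aco 11 * sfun 11 t + aco 12 * sfun 12 t := by
      norm_num [Finset.sum_Icc_succ_top, Finset.Icc_self]
    rw [hG₃, hsum]
    simp only [h2w]
    simp only [hwt]
    simp only [sfun, ← hsdef]
    simp only [zpow_neg, zpow_ofNat, zpow_natCast]
    simp only [div_pow, aco]
    have hsne : s ≠ 0 := hs.ne'
    field_simp
    ring
  -- iterated derivatives of G₃ on the neighborhood
  have main : ∀ m : ℕ, ∀ t ∈ Set.Ioo (-(1/96) : ℝ) (1/96),
      iteratedDeriv m G₃ t = ∑ i ∈ Finset.Icc 3 12,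
        aco i * ((-24:ℝ)^m * (∏ k ∈ Finset.range m, ((i:ℝ) + 2*(k:ℝ))) * sfun (i+2*m) t) := by
    intro m
    induction m with
    | zero => intro t ht; simpa using hpt t ht
    | succ m ih =>
      intro t ht
      rw [iteratedDeriv_succ]
      have hev : iteratedDeriv m G₃ =ᶠ[nhds t] (fun x => ∑ i ∈ Finset.Icc 3 12,
          aco i * ((-24:ℝ)^m * (∏ k ∈ Finset.range m, ((i:ℝ) + 2*(k:ℝ))) * sfun (i+2*m) x)) :=
        Filter.eventuallyEq_of_mem (isOpen_Ioo.mem_nhds ht) (fun x hx => ih x hx)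
      rw [hev.deriv_eq]
      have hd : HasDerivAt (fun x => ∑ i ∈ Finset.Icc 3 12,
          aco i * ((-24:ℝ)^m * (∏ k ∈ Finset.range m, ((i:ℝ) + 2*(k:ℝ))) * sfun (i+2*m) x))
          (∑ i ∈ Finset.Icc 3 12, aco i * ((-24:ℝ)^m * (∏ k ∈ Finset.range m, ((i:ℝ) + 2*(k:ℝ)))
            * (-(24*((i+2*m : ℕ):ℝ)) * sfun (i+2*m+2) t))) t := by
        apply HasDerivAt.fun_sum
        intro i _
        exact ((sderiv (i+2*m) ht).const_mul _).const_mul (aco i)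
      rw [hd.deriv]
      refine Finset.sum_congr rfl fun i _ => ?_
      rw [Finset.prod_range_succ, show i + 2*(m+1) = i + 2*m + 2 by ring]
      push_cast
      ring
  have h0mem : (0:ℝ) ∈ Set.Ioo (-(1/96) : ℝ) (1/96) := by norm_num
  rw [main n 0 h0mem]
  have hsq : ((-1:ℝ)^n) * ((-1:ℝ)^n) = 1 := by rw [← mul_pow]; norm_num
  calc (-1:ℝ)^n * ∑ i ∈ Finset.Icc 3 12,
        aco i * ((-24:ℝ)^n * (∏ k ∈ Finset.range n, ((i:ℝ) + 2*(k:ℝ))) * sfun (i+2*n) 0)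
      = ∑ i ∈ Finset.Icc 3 12, aco i * 24^n * (∏ k ∈ Finset.range n, ((i:ℝ) + 2*(k:ℝ))) := by
        rw [Finset.mul_sum]
        refine Finset.sum_congr rfl fun i _ => ?_
        rw [sfun_zero, show ((-24:ℝ))^n = (-1)^n * 24^n by rw [← mul_pow]; norm_num]
        linear_combination (aco i * 24^n * (∏ k ∈ Finset.range n, ((i:ℝ) + 2*(k:ℝ)))) * hsq
    _ = 12 ^ n * ((((n:ℕ):ℝ) + 1 - 1) * (((n:ℕ):ℝ) + 1 - 2) * (((n:ℕ):ℝ) + 1 - 3)) *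
        (4 ^ n * (((n+1)! : ℕ) : ℝ) * (245 * (((n:ℕ):ℝ)+1) / 20736 + 781 / 41472)
          - (((2 * (n+1))! : ℕ) : ℝ) / (((n+1)! : ℕ) : ℝ) * (337 * (((n:ℕ):ℝ)+1) / 22680 + 1 / 1008)) := by
        rw [key n]; ring
    _ = _ := by push_cast; ring
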